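/- Suppose |S| = |R| = n, M_0 = ∅, and for i = 1,…,n, P_i is an augmenting path with respect to M_{i−1} and M_i = M_{i−1} ⊕ P_i. Then for every t ≥ 1, ∑_{i=1}^{n} φ_t(P_i) ≥ ((t−1)/2) · ∑_{i=1}^{n} ℓ(P_i). -/

import Mathlib

/-- The cost of a matching, viewed as a finite set of (server, request) pairs. -/
noncomputable def matchCost {X : Type*} [MetricSpace X] (M : Finset (X × X)) : ℝ :=
  ∑ e ∈ M, dist e.1 e.2

/-- `M` is a matching between the finite point sets `S` and `R`: every edge
goes from `S` to `R` and every point appears in at most one edge. -/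
def IsMatching {X : Type*} (S R : Finset X) (M : Finset (X × X)) : Prop :=
  (∀ e ∈ M, e.1 ∈ S ∧ e.2 ∈ R) ∧
    ∀ e ∈ M, ∀ e' ∈ M, e ≠ e' → e.1 ≠ e'.1 ∧ e.2 ≠ e'.2

/-- An augmenting path with respect to the matching `M`, given in 0-indexed
form: the path is `r^0, s^1, r^1, …, r^{k-1}, s^k` where `rp j = r^j`
(for `j < k`) and `sp j = s^{j+1}` (for `j < k`).  Its non-matching edges are
`(sp j, rp j)` for `j < k` and its matching edges are `(sp j, rp (j+1))` for
`j < k - 1`; the endpoints `rp 0` and `sp (k-1)` are unmatched in `M`, and all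
`2k` points are distinct. -/
structure AugPath {X : Type*} (S R : Finset X) (M : Finset (X × X)) where
  k : ℕ
  hk : 1 ≤ k
  sp : ℕ → X
  rp : ℕ → X
  sp_mem : ∀ j < k, sp j ∈ S
  rp_mem : ∀ j < k, rp j ∈ R
  sp_inj : ∀ j < k, ∀ j' < k, sp j = sp j' → j = j'
  rp_inj : ∀ j < k, ∀ j' < k, rp j = rp j' → j = j'
  edge_mem : ∀ j < k - 1, (sp j, rp (j + 1)) ∈ M
  edge_not_mem : ∀ j < k, (sp j, rp j) ∉ M
  free_start : ∀ e ∈ M, e.2 ≠ rp 0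
  free_end : ∀ e ∈ M, e.1 ≠ sp (k - 1)

/-- The `t`-net-cost `φ_t(P)` of an augmenting path. -/
noncomputable def AugPath.netCost {X : Type*} [MetricSpace X] {S R : Finset X}
    {M : Finset (X × X)} (P : AugPath S R M) (t : ℝ) : ℝ :=
  t * ∑ j ∈ Finset.range P.k, dist (P.sp j) (P.rp j) -
    ∑ j ∈ Finset.range (P.k - 1), dist (P.sp j) (P.rp (j + 1))

/-- The length `ℓ(P)` of an augmenting path. -/
noncomputable def AugPath.len {X : Type*} [MetricSpace X] {S R : Finset X}
    {M : Finset (X × X)} (P : AugPath S R M) : ℝ :=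
  (∑ j ∈ Finset.range P.k, dist (P.sp j) (P.rp j)) +
    ∑ j ∈ Finset.range (P.k - 1), dist (P.sp j) (P.rp (j + 1))

/-- The matching `M ⊕ P` obtained by augmenting `M` along `P`. -/
def AugPath.augment {X : Type*} [DecidableEq X] {S R : Finset X}
    {M : Finset (X × X)} (P : AugPath S R M) : Finset (X × X) :=
  (M \ (Finset.range (P.k - 1)).image (fun j => (P.sp j, P.rp (j + 1)))) ∪
    (Finset.range P.k).image (fun j => (P.sp j, P.rp j))

lemma augment_matchCost {X : Type*} [MetricSpace X] [DecidableEq X] {S R : Finset X}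
    {M : Finset (X × X)} (P : AugPath S R M) :
    matchCost P.augment = matchCost M
      - ∑ j ∈ Finset.range (P.k - 1), dist (P.sp j) (P.rp (j + 1))
      + ∑ j ∈ Finset.range P.k, dist (P.sp j) (P.rp j) := by
  classical
  set I1 := (Finset.range (P.k - 1)).image (fun j => (P.sp j, P.rp (j + 1))) with hI1
  set I2 := (Finset.range P.k).image (fun j => (P.sp j, P.rp j)) with hI2
  have hsub : I1 ⊆ M := by
    intro e he
    simp only [hI1, Finset.mem_image, Finset.mem_range] at he
    obtain ⟨j, hj, rfl⟩ := he
    exact P.edge_mem j hj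
  have hdisj2 : Disjoint (M \ I1) I2 := by
    rw [Finset.disjoint_right]
    intro e he
    simp only [hI2, Finset.mem_image, Finset.mem_range] at he
    obtain ⟨j, hj, rfl⟩ := he
    simp only [Finset.mem_sdiff]
    intro ⟨hm, _⟩
    exact P.edge_not_mem j hj hm
  have hcost1 : matchCost I1 =
      ∑ j ∈ Finset.range (P.k - 1), dist (P.sp j) (P.rp (j + 1)) := by
    rw [hI1, matchCost, Finset.sum_image]
    intro j hj j' hj' h
    simp only [Finset.mem_coe, Finset.mem_range] at hj hj'
    exact P.sp_inj j (lt_of_lt_of_le hj (Nat.sub_le _ _))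
      j' (lt_of_lt_of_le hj' (Nat.sub_le _ _)) (congrArg Prod.fst h)
  have hcost2 : matchCost I2 =
      ∑ j ∈ Finset.range P.k, dist (P.sp j) (P.rp j) := by
    rw [hI2, matchCost, Finset.sum_image]
    intro j hj j' hj' h
    simp only [Finset.mem_coe, Finset.mem_range] at hj hj'
    exact P.sp_inj j hj j' hj' (congrArg Prod.fst h)
  have : matchCost P.augment = matchCost (M \ I1) + matchCost I2 := by
    rw [AugPath.augment, ← hI1, ← hI2, matchCost, Finset.sum_union hdisj2]
    rfl
  rw [this, hcost2]
  have : matchCost (M \ I1) = matchCost M - matchCost I1 := by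
    rw [matchCost, matchCost, matchCost, Finset.sum_sdiff_eq_sub hsub]
  rw [this, hcost1]

/-- With `|S| = |R| = n`, `M_0 = ∅` and `M_i = M_{i−1} ⊕ P_i`
where each `P_i` is an augmenting path with respect to `M_{i−1}`
(0-indexed below: `P i` is an augmenting path with respect to `M i` and
`M (i+1) = M i ⊕ P i` for `i = 0, …, n−1`), for every `t ≥ 1` one has
`∑_{i=1}^{n} φ_t(P_i) ≥ ((t−1)/2) · ∑_{i=1}^{n} ℓ(P_i)`. -/
theorem netcost_sum_ge_length_sum {X : Type*} [MetricSpace X] [DecidableEq X]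
    (S R : Finset X) (hdisj : Disjoint S R) (n : ℕ)
    (hS : S.card = n) (hR : R.card = n)
    (M : ℕ → Finset (X × X)) (hM0 : M 0 = ∅)
    (P : (i : Fin n) → AugPath S R (M i))
    (hrec : ∀ i : Fin n, M ((i : ℕ) + 1) = (P i).augment)
    (t : ℝ) (ht : 1 ≤ t) :
    ((t - 1) / 2) * ∑ i, (P i).len ≤ ∑ i, (P i).netCost t := by
  have key : ∀ i : Fin n, matchCost (M ((i : ℕ) + 1)) =
      matchCost (M i)
        - ∑ j ∈ Finset.range ((P i).k - 1), dist ((P i).sp j) ((P i).rp (j + 1))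
        + ∑ j ∈ Finset.range (P i).k, dist ((P i).sp j) ((P i).rp j) := by
    intro i
    rw [hrec i]
    exact augment_matchCost (P i)
  -- telescoping
  have htel : ∑ i : Fin n,
      ((∑ j ∈ Finset.range (P i).k, dist ((P i).sp j) ((P i).rp j))
        - ∑ j ∈ Finset.range ((P i).k - 1), dist ((P i).sp j) ((P i).rp (j + 1)))
      = matchCost (M n) - matchCost (M 0) := by
    have h1 : ∑ i : Fin n,
        ((∑ j ∈ Finset.range (P i).k, dist ((P i).sp j) ((P i).rp j))
          - ∑ j ∈ Finset.range ((P i).k - 1), dist ((P i).sp j) ((P i).rp (j + 1)))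
        = ∑ i : Fin n, (matchCost (M ((i : ℕ) + 1)) - matchCost (M i)) :=
      Finset.sum_congr rfl fun i _ => by rw [key i]; ring
    rw [h1, Fin.sum_univ_eq_sum_range (fun i => matchCost (M (i + 1)) - matchCost (M i)),
      Finset.sum_range_sub (fun i => matchCost (M i))]
  have hM0' : matchCost (M 0) = 0 := by simp [hM0, matchCost]
  have hMn : 0 ≤ matchCost (M n) :=
    Finset.sum_nonneg fun e _ => dist_nonneg
  set A := ∑ i : Fin n, ∑ j ∈ Finset.range (P i).k, dist ((P i).sp j) ((P i).rp j) with hA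
  set B := ∑ i : Fin n, ∑ j ∈ Finset.range ((P i).k - 1), dist ((P i).sp j) ((P i).rp (j + 1)) with hB
  have hAB : B ≤ A := by
    rw [Finset.sum_sub_distrib] at htel
    rw [hM0'] at htel
    nlinarith [htel, hMn]
  have hBnn : 0 ≤ B :=
    Finset.sum_nonneg fun i _ => Finset.sum_nonneg fun j _ => dist_nonneg
  have hlen : ∑ i, (P i).len = A + B := by
    simp only [AugPath.len, hA, hB, ← Finset.sum_add_distrib]
  have hnet : ∑ i, (P i).netCost t = t * A - B := by
    simp only [AugPath.netCost, hA, hB, ← Finset.sum_sub_distrib, Finset.mul_sum]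
  rw [hlen, hnet]
  nlinarith [mul_nonneg (by linarith : (0:ℝ) ≤ t + 1) (by linarith : (0:ℝ) ≤ A - B)]
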